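/- Let ρ, η : ℝ → ℝ be continuous nonnegative functions with ∫ ρ(z) dz = ∫ η(z) dz = 1 and ∫ z ρ(z) dz = ∫ z η(z) dz, and let μ, ν be the measures with Lebesgue densities ρ, η respectively, satisfying P_μ(k) ≤ P_ν(k) for all k. Suppose there are reals ℓ_ν < ℓ_μ ≤ e₋ < e₊ ≤ r_μ < r_ν such that ρ > 0 exactly on (ℓ_μ, r_μ), η > 0 exactly on (ℓ_ν, r_ν), ρ > η on (e₋, e₊), ρ ≤ η off (e₋, e₊), and η > ρ on (ℓ_ν, e₋) ∪ (e₊, r_ν). Then for every x ∈ (e₋, r_μ) there exist reals f and g with f < e₋ < x < g such that ∫_f^x ρ(z) dz = ∫_f^g η(z) dz and ∫_f^x z ρ(z) dz = ∫_f^g z η(z) dz. -/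
import Mathlib
open MeasureTheory

lemma disp_integral_eq_intervalIntegral {f : ℝ → ℝ} {a b : ℝ} (hab : a ≤ b)
    (hf : ∀ z ∉ Set.Ioo a b, f z = 0) :
    ∫ z, f z = ∫ z in a..b, f z := by
  rw [intervalIntegral.integral_of_le hab]
  rw [setIntegral_eq_integral_of_forall_compl_eq_zero (fun z hz => ?_)]
  refine hf z fun hz' => hz ⟨hz'.1, le_of_lt hz'.2⟩

lemma disp_put_eq {f : ℝ → ℝ} {a k : ℝ} (hf : ∀ z, z ≤ a → f z = 0) (hak : a ≤ k) :
    ∫ z, max (k - z) 0 * f z = ∫ z in a..k, (k - z) * f z := by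
  have h1 : ∀ z ∉ Set.Ioc a k, max (k - z) 0 * f z = 0 := by
    intro z hz
    rw [Set.mem_Ioc, not_and_or, not_lt, not_le] at hz
    rcases hz with h | h
    · rw [hf z h, mul_zero]
    · rw [max_eq_right (by linarith), zero_mul]
  rw [← setIntegral_eq_integral_of_forall_compl_eq_zero h1,
    intervalIntegral.integral_of_le hak]
  exact setIntegral_congr_fun measurableSet_Ioc fun z hz => by
    rw [max_eq_left (sub_nonneg.2 hz.2)]

lemma disp_inverse {η : ℝ → ℝ} {lν rν : ℝ} (hlt : lν < rν)
    (hηc : Continuous η) (hη0 : ∀ z, 0 ≤ η z) (hηint : Integrable η)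
    (hpos : ∀ z ∈ Set.Ioo lν rν, 0 < η z)
    (hN1 : (∫ z in lν..rν, η z) = 1) :
    ∃ G : ℝ → ℝ, Continuous G ∧ ∀ p, 0 ≤ p → p ≤ 1 →
      lν ≤ G p ∧ G p ≤ rν ∧ (∫ z in lν..(G p), η z) = p := by
  set N : ℝ → ℝ := fun t => ∫ z in lν..t, η z with hNdef
  have hNc : Continuous N :=
    intervalIntegral.continuous_primitive (fun a b => hηint.intervalIntegrable) lν
  have hadd : ∀ a b : ℝ, N a + ∫ z in a..b, η z = N b := fun a b =>
    intervalIntegral.integral_add_adjacent_intervals hηint.intervalIntegrable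
      hηint.intervalIntegrable
  have hNmono : Monotone N := fun a b hab => by
    have := hadd a b
    have h2 := intervalIntegral.integral_nonneg (μ := volume) hab (fun z _ => hη0 z)
    linarith
  have hNstrict : ∀ a b, lν ≤ a → a < b → b ≤ rν → N a < N b := by
    intro a b ha hab hb
    have := hadd a b
    have h2 : 0 < ∫ z in a..b, η z :=
      intervalIntegral.intervalIntegral_pos_of_pos_on hηint.intervalIntegrable
        (fun z hz => hpos z ⟨lt_of_le_of_lt ha hz.1, lt_of_lt_of_le hz.2 hb⟩) hab
    linarith
  have hN0 : N lν = 0 := intervalIntegral.integral_same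
  have hN1' : N rν = 1 := hN1
  have hmem : ∀ t : Set.Icc lν rν, N t ∈ Set.Icc (0:ℝ) 1 := by
    intro t
    constructor
    · rw [← hN0]; exact hNmono t.2.1
    · rw [← hN1']; exact hNmono t.2.2
  have hinj : Function.Injective
      (fun t : Set.Icc lν rν => (⟨N t, hmem t⟩ : Set.Icc (0:ℝ) 1)) := by
    intro s t hst
    have h : N s = N t := congrArg Subtype.val hst
    rcases lt_trichotomy (s:ℝ) t with hc | hc | hc
    · exact absurd h (ne_of_lt (hNstrict _ _ s.2.1 hc t.2.2))
    · exact Subtype.ext hc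
    · exact absurd h.symm (ne_of_lt (hNstrict _ _ t.2.1 hc s.2.2))
  have hsurj : Function.Surjective
      (fun t : Set.Icc lν rν => (⟨N t, hmem t⟩ : Set.Icc (0:ℝ) 1)) := by
    intro p
    have hp : (p:ℝ) ∈ Set.Icc (N lν) (N rν) := by rw [hN0, hN1']; exact p.2
    obtain ⟨t, ht, hNt⟩ := intermediate_value_Icc hlt.le hNc.continuousOn hp
    exact ⟨⟨t, ht⟩, Subtype.ext hNt⟩
  let e : Set.Icc lν rν ≃ Set.Icc (0:ℝ) 1 := Equiv.ofBijective _ ⟨hinj, hsurj⟩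
  have hec : Continuous e := Continuous.subtype_mk (hNc.comp continuous_subtype_val) _
  let h := hec.homeoOfEquivCompactToT2
  refine ⟨fun p => (h.symm ⟨max 0 (min p 1),
      ⟨le_max_left _ _, max_le zero_le_one (min_le_right _ _)⟩⟩ : ℝ), ?_, ?_⟩
  · exact continuous_subtype_val.comp (h.symm.continuous.comp
      (Continuous.subtype_mk (continuous_const.max (continuous_id.min continuous_const)) _))
  · intro p h0 h1
    have hcl : max 0 (min p 1) = p := by rw [min_eq_left h1, max_eq_right h0]
    set pp : Set.Icc (0:ℝ) 1 := ⟨max 0 (min p 1),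
      ⟨le_max_left _ _, max_le zero_le_one (min_le_right _ _)⟩⟩ with hpp
    refine ⟨(h.symm pp).2.1, (h.symm pp).2.2, ?_⟩
    have : h (h.symm pp) = pp := h.apply_symm_apply pp
    have h2 : N (h.symm pp : ℝ) = (pp : ℝ) := congrArg Subtype.val this
    show N (h.symm pp : ℝ) = p
    rw [h2]
    exact hcl

lemma disp_ii {u : ℝ → ℝ} (hu : Continuous u) (a b : ℝ) :
    IntervalIntegrable u MeasureTheory.volume a b := hu.intervalIntegrable _ _

lemma disp_ii_zmul {u : ℝ → ℝ} (hu : Continuous u) (a b : ℝ) :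
    IntervalIntegrable (fun z => z * u z) MeasureTheory.volume a b :=
  (continuous_id.mul hu).intervalIntegrable _ _

lemma disp_ii_cmul {u : ℝ → ℝ} (hu : Continuous u) (c a b : ℝ) :
    IntervalIntegrable (fun z => c * u z) MeasureTheory.volume a b :=
  (continuous_const.mul hu).intervalIntegrable _ _

lemma disp_expand {u : ℝ → ℝ} (hu : Continuous u) (c a b : ℝ) :
    (∫ z in a..b, (c - z) * u z) = c * (∫ z in a..b, u z) - ∫ z in a..b, z * u z := by
  have h1 : (∫ z in a..b, (c - z) * u z) = ∫ z in a..b, (c * u z - z * u z) :=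
    intervalIntegral.integral_congr fun z _ => by ring
  rw [h1, intervalIntegral.integral_sub (disp_ii_cmul hu c a b) (disp_ii_zmul hu a b),
    intervalIntegral.integral_const_mul]

lemma disp_expand' {u : ℝ → ℝ} (hu : Continuous u) (c a b : ℝ) :
    (∫ z in a..b, (z - c) * u z) = (∫ z in a..b, z * u z) - c * ∫ z in a..b, u z := by
  have h1 : (∫ z in a..b, (z - c) * u z) = ∫ z in a..b, (z * u z - c * u z) :=
    intervalIntegral.integral_congr fun z _ => by ring
  rw [h1, intervalIntegral.integral_sub (disp_ii_zmul hu a b) (disp_ii_cmul hu c a b),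
    intervalIntegral.integral_const_mul]

lemma disp_comb {u v : ℝ → ℝ} (hu : Continuous u) (hv : Continuous v) (c a b : ℝ) :
    (∫ z in a..b, (z - c) * (u z - v z)) =
      ((∫ z in a..b, z * u z) - ∫ z in a..b, z * v z)
        - c * ((∫ z in a..b, u z) - ∫ z in a..b, v z) := by
  have i1 : IntervalIntegrable (fun z => (z - c) * u z) MeasureTheory.volume a b :=
    ((continuous_id.sub continuous_const).mul hu).intervalIntegrable _ _
  have i2 : IntervalIntegrable (fun z => (z - c) * v z) MeasureTheory.volume a b :=
    ((continuous_id.sub continuous_const).mul hv).intervalIntegrable _ _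
  have h1 : (∫ z in a..b, (z - c) * (u z - v z))
      = ∫ z in a..b, ((z - c) * u z - (z - c) * v z) :=
    intervalIntegral.integral_congr fun z _ => by ring
  rw [h1, intervalIntegral.integral_sub i1 i2, disp_expand' hu, disp_expand' hv]
  ring
open MeasureTheory

set_option maxHeartbeats 1000000 in
/-- Under the Dispersion Assumption on the densities `ρ` and `η`, for every
`x ∈ (e₋, r_μ)` there exist `f < e₋ < x < g` solving the mass and mean equations. -/
theorem dispersion_existence_fg
    (ρ η : ℝ → ℝ) (hρc : Continuous ρ) (hηc : Continuous η)
    (hρ0 : ∀ z, 0 ≤ ρ z) (hη0 : ∀ z, 0 ≤ η z)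
    (hρint : Integrable ρ) (hηint : Integrable η)
    (hρ1 : ∫ z, ρ z = 1) (hη1 : ∫ z, η z = 1)
    (hρzint : Integrable (fun z => z * ρ z)) (hηzint : Integrable (fun z => z * η z))
    (hmean : ∫ z, z * ρ z = ∫ z, z * η z)
    (lν lμ em ep rμ rν : ℝ)
    (h1 : lν < lμ) (h2 : lμ ≤ em) (h3 : em < ep) (h4 : ep ≤ rμ) (h5 : rμ < rν)
    (hconv : ∀ k : ℝ, ∫ z, max (k - z) 0 * ρ z ≤ ∫ z, max (k - z) 0 * η z)
    (hρsupp : ∀ z, 0 < ρ z ↔ z ∈ Set.Ioo lμ rμ)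
    (hηsupp : ∀ z, 0 < η z ↔ z ∈ Set.Ioo lν rν)
    (hρη : ∀ z ∈ Set.Ioo em ep, η z < ρ z)
    (hρη' : ∀ z ∉ Set.Ioo em ep, ρ z ≤ η z)
    (hηρ : ∀ z ∈ Set.Ioo lν em ∪ Set.Ioo ep rν, ρ z < η z) :
    ∀ x ∈ Set.Ioo em rμ, ∃ f g : ℝ, f < em ∧ em < x ∧ x < g ∧
      (∫ z in f..x, ρ z) = (∫ z in f..g, η z) ∧
      (∫ z in f..x, z * ρ z) = (∫ z in f..g, z * η z) := by
  intro x hx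
  obtain ⟨hemx, hxrμ⟩ := hx
  have ρ0 : ∀ z, z ∉ Set.Ioo lμ rμ → ρ z = 0 := fun z hz =>
    le_antisymm (not_lt.1 fun h => hz ((hρsupp z).1 h)) (hρ0 z)
  have η0 : ∀ z, z ∉ Set.Ioo lν rν → η z = 0 := fun z hz =>
    le_antisymm (not_lt.1 fun h => hz ((hηsupp z).1 h)) (hη0 z)
  have hηpos : ∀ z ∈ Set.Ioo lν rν, 0 < η z := fun z hz => (hηsupp z).2 hz
  have hρpos : ∀ z ∈ Set.Ioo lμ rμ, 0 < ρ z := fun z hz => (hρsupp z).2 hz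
  have hlνrν : lν < rν := by linarith
  have hlνem : lν < em := by linarith
  have hlνx : lν < x := by linarith
  have hxrν : x < rν := by linarith
  -- primitives
  set M : ℝ → ℝ := fun t => ∫ z in lν..t, ρ z with hMdef
  set N : ℝ → ℝ := fun t => ∫ z in lν..t, η z with hNdef
  set Mz : ℝ → ℝ := fun t => ∫ z in lν..t, z * ρ z with hMzdef
  set Nz : ℝ → ℝ := fun t => ∫ z in lν..t, z * η z with hNzdef
  have hMc : Continuous M :=
    intervalIntegral.continuous_primitive (fun a b => hρc.intervalIntegrable _ _) lν
  have hNc : Continuous N :=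
    intervalIntegral.continuous_primitive (fun a b => hηc.intervalIntegrable _ _) lν
  have hMzc : Continuous Mz :=
    intervalIntegral.continuous_primitive (fun a b => (continuous_id.mul hρc).intervalIntegrable _ _) lν
  have hNzc : Continuous Nz :=
    intervalIntegral.continuous_primitive (fun a b => (continuous_id.mul hηc).intervalIntegrable _ _) lν
  have hMd : ∀ a b : ℝ, (∫ z in a..b, ρ z) = M b - M a := by
    intro a b
    have h : M a + (∫ z in a..b, ρ z) = M b :=
      intervalIntegral.integral_add_adjacent_intervals (hρc.intervalIntegrable _ _)
        (hρc.intervalIntegrable _ _)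
    linarith
  have hNd : ∀ a b : ℝ, (∫ z in a..b, η z) = N b - N a := by
    intro a b
    have h : N a + (∫ z in a..b, η z) = N b :=
      intervalIntegral.integral_add_adjacent_intervals (hηc.intervalIntegrable _ _)
        (hηc.intervalIntegrable _ _)
    linarith
  have hMzd : ∀ a b : ℝ, (∫ z in a..b, z * ρ z) = Mz b - Mz a := by
    intro a b
    have h : Mz a + (∫ z in a..b, z * ρ z) = Mz b :=
      intervalIntegral.integral_add_adjacent_intervals
        ((continuous_id.mul hρc).intervalIntegrable _ _)
        ((continuous_id.mul hρc).intervalIntegrable _ _)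
    linarith
  have hNzd : ∀ a b : ℝ, (∫ z in a..b, z * η z) = Nz b - Nz a := by
    intro a b
    have h : Nz a + (∫ z in a..b, z * η z) = Nz b :=
      intervalIntegral.integral_add_adjacent_intervals
        ((continuous_id.mul hηc).intervalIntegrable _ _)
        ((continuous_id.mul hηc).intervalIntegrable _ _)
    linarith
  have hM0 : M lν = 0 := intervalIntegral.integral_same
  have hN0 : N lν = 0 := intervalIntegral.integral_same
  have hMz0 : Mz lν = 0 := intervalIntegral.integral_same
  have hNz0 : Nz lν = 0 := intervalIntegral.integral_same
  -- totals
  have hρvan : ∀ z, z ∉ Set.Ioo lν rν → ρ z = 0 := fun z hz =>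
    ρ0 z fun hz' => hz ⟨lt_trans h1 hz'.1, lt_trans hz'.2 h5⟩
  have hM1 : M rν = 1 := by
    have h := disp_integral_eq_intervalIntegral (f := ρ) hlνrν.le hρvan
    show (∫ z in lν..rν, ρ z) = 1
    rw [← h, hρ1]
  have hN1 : N rν = 1 := by
    have h := disp_integral_eq_intervalIntegral (f := η) hlνrν.le η0
    show (∫ z in lν..rν, η z) = 1
    rw [← h, hη1]
  have hMzNz : Mz rν = Nz rν := by
    have hρz : ∀ z, z ∉ Set.Ioo lν rν → z * ρ z = 0 := fun z hz => by rw [hρvan z hz, mul_zero]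
    have hηz : ∀ z, z ∉ Set.Ioo lν rν → z * η z = 0 := fun z hz => by rw [η0 z hz, mul_zero]
    have ha := disp_integral_eq_intervalIntegral hlνrν.le hρz
    have hb := disp_integral_eq_intervalIntegral hlνrν.le hηz
    show (∫ z in lν..rν, z * ρ z) = ∫ z in lν..rν, z * η z
    rw [← ha, ← hb, hmean]
  -- monotonicity of N
  have hNmono : Monotone N := fun a b hab => by
    have h := hNd a b
    have h2 := intervalIntegral.integral_nonneg (μ := volume) hab (fun z _ => hη0 z)
    linarith
  have hNstrict : ∀ a b, lν ≤ a → a < b → b ≤ rν → N a < N b := by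
    intro a b ha hab hb
    have h := hNd a b
    have h2 : 0 < ∫ z in a..b, η z :=
      intervalIntegral.intervalIntegral_pos_of_pos_on (hηc.intervalIntegrable _ _)
        (fun z hz => hηpos z ⟨lt_of_le_of_lt ha hz.1, lt_of_lt_of_le hz.2 hb⟩) hab
    linarith
  have hNx0 : 0 ≤ N x := by rw [← hN0]; exact hNmono hlνx.le
  have hMx1 : M x < 1 := by
    have hd := hMd x rν
    have hs : (∫ z in x..rμ, ρ z) + (∫ z in rμ..rν, ρ z) = ∫ z in x..rν, ρ z :=
      intervalIntegral.integral_add_adjacent_intervals (hρc.intervalIntegrable _ _)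
        (hρc.intervalIntegrable _ _)
    have hp : 0 < ∫ z in x..rμ, ρ z :=
      intervalIntegral.intervalIntegral_pos_of_pos_on (hρc.intervalIntegrable _ _)
        (fun z hz => hρpos z ⟨by linarith [hz.1], hz.2⟩) hxrμ
    have hnn : 0 ≤ ∫ z in rμ..rν, ρ z :=
      intervalIntegral.integral_nonneg (μ := volume) h5.le (fun z _ => hρ0 z)
    linarith
  -- φ and κ
  set κ : ℝ := 1 - N x with hκdef
  set φ : ℝ → ℝ := fun f => (M x - M f) - (N x - N f) with hφdef
  have hφc : Continuous φ := (continuous_const.sub hMc).sub (continuous_const.sub hNc)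
  have hκpos : 0 < κ := by
    have h := hNd x rν
    have hp : 0 < ∫ z in x..rν, η z :=
      intervalIntegral.intervalIntegral_pos_of_pos_on (hηc.intervalIntegrable _ _)
        (fun z hz => hηpos z ⟨lt_trans hlνx hz.1, hz.2⟩) hxrν
    rw [hκdef]; linarith
  have hφmono : ∀ a b, a ≤ b → b ≤ em → φ a ≤ φ b := by
    intro a b hab hbem
    have hMab := hMd a b
    have hNab := hNd a b
    have h : (∫ z in a..b, ρ z) ≤ ∫ z in a..b, η z :=
      intervalIntegral.integral_mono_on hab (hρc.intervalIntegrable _ _)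
        (hηc.intervalIntegrable _ _)
        (fun z hz => hρη' z fun hz' => absurd (lt_of_lt_of_le hz'.1 (le_refl _))
          (not_lt.2 (by linarith [hz.2])))
    simp only [hφdef]; linarith
  have hφstrict : ∀ a b, lν ≤ a → a < b → b ≤ em → φ a < φ b := by
    intro a b ha hab hb
    have hMab := hMd a b
    have hNab := hNd a b
    have h : 0 < ∫ z in a..b, (η z - ρ z) :=
      intervalIntegral.intervalIntegral_pos_of_pos_on
        ((hηc.sub hρc).intervalIntegrable _ _)
        (fun z hz => sub_pos.2 (hηρ z (Or.inl ⟨lt_of_le_of_lt ha hz.1, lt_of_lt_of_le hz.2 hb⟩)))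
        hab
    have h2 : (∫ z in a..b, (η z - ρ z)) = (∫ z in a..b, η z) - ∫ z in a..b, ρ z :=
      intervalIntegral.integral_sub (hηc.intervalIntegrable _ _) (hρc.intervalIntegrable _ _)
    simp only [hφdef]; linarith
  have hφlν_of_epx : ep ≤ x → 0 < φ lν := by
    intro hepx
    have hMx := hMd x rν
    have hNx := hNd x rν
    have h : 0 < ∫ z in x..rν, (η z - ρ z) :=
      intervalIntegral.intervalIntegral_pos_of_pos_on
        ((hηc.sub hρc).intervalIntegrable _ _)
        (fun z hz => sub_pos.2 (hηρ z (Or.inr ⟨lt_of_le_of_lt hepx hz.1, hz.2⟩))) hxrν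
    have h2 : (∫ z in x..rν, (η z - ρ z)) = (∫ z in x..rν, η z) - ∫ z in x..rν, ρ z :=
      intervalIntegral.integral_sub (hηc.intervalIntegrable _ _) (hρc.intervalIntegrable _ _)
    simp only [hφdef]
    rw [hM0, hN0]
    linarith
  have hφem : 0 < φ em := by
    rcases le_total x ep with hxep | hepx
    · have hMab := hMd em x
      have hNab := hNd em x
      have h : 0 < ∫ z in em..x, (ρ z - η z) :=
        intervalIntegral.intervalIntegral_pos_of_pos_on
          ((hρc.sub hηc).intervalIntegrable _ _)
          (fun z hz => sub_pos.2 (hρη z ⟨hz.1, lt_of_lt_of_le hz.2 hxep⟩)) hemx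
      have h2 : (∫ z in em..x, (ρ z - η z)) = (∫ z in em..x, ρ z) - ∫ z in em..x, η z :=
        intervalIntegral.integral_sub (hρc.intervalIntegrable _ _) (hηc.intervalIntegrable _ _)
      simp only [hφdef]; linarith
    · exact lt_of_lt_of_le (hφlν_of_epx hepx) (hφmono lν em hlνem.le (le_refl _))
  have hφlνκ : φ lν < κ := by
    simp only [hφdef, hκdef]; rw [hM0, hN0]; linarith
  -- inverse of N
  obtain ⟨G, hGc, hG⟩ := disp_inverse hlνrν hηc hη0 hηint hηpos hN1
  set q : ℝ → ℝ := fun f => N f + (M x - M f) with hqdef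
  have hqφ : ∀ f, q f = N x + φ f := fun f => by simp only [hqdef, hφdef]; ring
  set g : ℝ → ℝ := fun f => G (q f) with hgdef
  have hgc : Continuous g := hGc.comp (hNc.add (continuous_const.sub hMc))
  have hgprop : ∀ f, 0 ≤ φ f → φ f ≤ κ →
      lν ≤ g f ∧ g f ≤ rν ∧ N (g f) = q f ∧ x ≤ g f := by
    intro f h0 h1
    have hq0 : 0 ≤ q f := by rw [hqφ]; linarith
    have hq1 : q f ≤ 1 := by rw [hqφ]; simp only [hκdef] at h1; linarith
    obtain ⟨ha, hb, hc⟩ := hG (q f) hq0 hq1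
    have hcN : N (g f) = q f := hc
    refine ⟨ha, hb, hcN, ?_⟩
    by_contra hlt
    push_neg at hlt
    have := hNstrict (g f) x ha hlt hxrν.le
    rw [hcN, hqφ] at this
    linarith
  have hgx : ∀ f, 0 < φ f → φ f ≤ κ → x < g f := by
    intro f h0 h1
    obtain ⟨ha, hb, hc, hd⟩ := hgprop f h0.le h1
    rcases lt_or_eq_of_le hd with h | h
    · exact h
    · exfalso
      rw [← h] at hc
      rw [hqφ] at hc
      linarith
  -- the mean-difference function
  set Ψ : ℝ → ℝ := fun f => (Nz (g f) - Nz f) - (Mz x - Mz f) with hΨdef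
  have hΨc : Continuous Ψ := ((hNzc.comp hgc).sub hNzc).sub (continuous_const.sub hMzc)
  -- left endpoint
  obtain ⟨l, hlνl, hlem, hφl0, hφlκ, hΨl, hstrong⟩ :
      ∃ l, lν ≤ l ∧ l < em ∧ 0 ≤ φ l ∧ φ l < κ ∧ Ψ l ≤ 0 ∧ (0 < φ l ∨ Ψ l < 0) := by
    rcases lt_or_ge 0 (φ lν) with hI | hII
    · -- Case I: l = lν, uses convex order hypothesis
      refine ⟨lν, le_refl _, hlνem, hI.le, hφlνκ, ?_, Or.inl hI⟩
      obtain ⟨ha, hb, hc, hd⟩ := hgprop lν hI.le hφlνκ.le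
      have hNg0 : N (g lν) = M x := by
        rw [hc, hqφ]
        have hphi : φ lν = (M x - M lν) - (N x - N lν) := rfl
        rw [hM0, hN0] at hphi
        linarith
      have hρv : ∀ z, z ≤ lν → ρ z = 0 := fun z hz =>
        ρ0 z fun h' => absurd h'.1 (not_lt.2 (hz.trans h1.le))
      have hηv : ∀ z, z ≤ lν → η z = 0 := fun z hz =>
        η0 z fun h' => absurd h'.1 (not_lt.2 hz)
      have hP := hconv (g lν)
      rw [disp_put_eq hρv ha, disp_put_eq hηv ha] at hP
      have hsplit : (∫ z in lν..x, (g lν - z) * ρ z) + (∫ z in x..(g lν), (g lν - z) * ρ z)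
          = ∫ z in lν..(g lν), (g lν - z) * ρ z :=
        intervalIntegral.integral_add_adjacent_intervals
          (((continuous_const.sub continuous_id).mul hρc).intervalIntegrable _ _)
          (((continuous_const.sub continuous_id).mul hρc).intervalIntegrable _ _)
      have hA : 0 ≤ ∫ z in x..(g lν), (g lν - z) * ρ z :=
        intervalIntegral.integral_nonneg hd
          (fun z hz => mul_nonneg (by linarith [hz.2]) (hρ0 z))
      have e1 : (∫ z in lν..x, (g lν - z) * ρ z)
          = g lν * (M x) - Mz x := by
        have := disp_expand hρc (g lν) lν x
        rw [hMd lν x, hMzd lν x, hM0, hMz0] at this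
        linarith
      have e2 : (∫ z in lν..(g lν), (g lν - z) * η z)
          = g lν * (M x) - Nz (g lν) := by
        have := disp_expand hηc (g lν) lν (g lν)
        rw [hNd lν (g lν), hNzd lν (g lν), hN0, hNz0, hNg0] at this
        linarith
      have hrfl : Ψ lν = (Nz (g lν) - Nz lν) - (Mz x - Mz lν) := rfl
      rw [hNz0, hMz0] at hrfl
      linarith
    · -- Case II: zero of φ
      have hxep : x < ep := by
        by_contra hh
        push_neg at hh
        exact absurd (hφlν_of_epx hh) (not_lt.2 hII)
      have h0mem : (0:ℝ) ∈ Set.Icc (φ lν) (φ em) := ⟨hII, hφem.le⟩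
      obtain ⟨l, hlmem, hφl⟩ := intermediate_value_Icc hlνem.le hφc.continuousOn h0mem
      have hlem : l < em := lt_of_le_of_ne hlmem.2
        (fun h => absurd (h ▸ hφl) (ne_of_gt hφem))
      obtain ⟨ha, hb, hc, hd⟩ := hgprop l (le_of_eq hφl.symm) (by rw [hφl]; exact hκpos.le)
      have hgl : g l = x := by
        refine le_antisymm ?_ hd
        by_contra hh
        push_neg at hh
        have hst := hNstrict x (g l) hlνx.le hh hb
        rw [hc, hqφ, hφl, add_zero] at hst
        exact lt_irrefl _ hst
      have T1 : 0 < ∫ z in l..em, (em - z) * (η z - ρ z) :=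
        intervalIntegral.intervalIntegral_pos_of_pos_on
          (((continuous_const.sub continuous_id).mul (hηc.sub hρc)).intervalIntegrable _ _)
          (fun z hz => mul_pos (by linarith [hz.2])
            (sub_pos.2 (hηρ z (Or.inl ⟨lt_of_le_of_lt hlmem.1 hz.1, hz.2⟩)))) hlem
      have T2 : 0 < ∫ z in em..x, (z - em) * (ρ z - η z) :=
        intervalIntegral.intervalIntegral_pos_of_pos_on
          (((continuous_id.sub continuous_const).mul (hρc.sub hηc)).intervalIntegrable _ _)
          (fun z hz => mul_pos (by linarith [hz.1])
            (sub_pos.2 (hρη z ⟨hz.1, lt_trans hz.2 hxep⟩))) hemx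
      have flip1 : (∫ z in l..em, (em - z) * (η z - ρ z))
          = -∫ z in l..em, (z - em) * (η z - ρ z) := by
        rw [← intervalIntegral.integral_neg]
        exact intervalIntegral.integral_congr fun z _ => by ring
      have flip2 : (∫ z in em..x, (z - em) * (ρ z - η z))
          = -∫ z in em..x, (z - em) * (η z - ρ z) := by
        rw [← intervalIntegral.integral_neg]
        exact intervalIntegral.integral_congr fun z _ => by ring
      have hml : (N x - N l) - (M x - M l) = 0 := by
        have hphi : φ l = (M x - M l) - (N x - N l) := rfl
        linarith [hphi, hφl]
      have key : (Nz x - Nz l) - (Mz x - Mz l)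
          = (∫ z in l..em, (z - em) * (η z - ρ z))
            + (∫ z in em..x, (z - em) * (η z - ρ z))
            + em * ((N x - N l) - (M x - M l)) := by
        rw [disp_comb hηc hρc em l em, disp_comb hηc hρc em em x,
          hNzd l em, hMzd l em, hNd l em, hMd l em,
          hNzd em x, hMzd em x, hNd em x, hMd em x]
        ring
      rw [hml, mul_zero, add_zero] at key
      have hΨlval : Ψ l < 0 := by
        have hrfl : Ψ l = (Nz (g l) - Nz l) - (Mz x - Mz l) := rfl
        rw [hgl] at hrfl
        linarith
      exact ⟨l, hlmem.1, hlem, le_of_eq hφl.symm, by rw [hφl]; exact hκpos,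
        hΨlval.le, Or.inr hΨlval⟩
  -- right endpoint
  obtain ⟨r, hlr, hrem, hφrκ, hΨr⟩ :
      ∃ r, l ≤ r ∧ r ≤ em ∧ φ r ≤ κ ∧ 0 < Ψ r := by
    rcases le_or_gt (φ em) κ with hA | hB
    · -- right endpoint at em
      refine ⟨em, hlem.le, le_refl _, hA, ?_⟩
      obtain ⟨ha, hb, hc, hd⟩ := hgprop em hφem.le hA
      have hxg1 : x < g em := hgx em hφem hA
      have hemp : em < min x ep := lt_min hemx h3
      have hpx : min x ep ≤ x := min_le_left _ _
      have hpep : min x ep ≤ ep := min_le_right _ _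
      have hmass : (N (g em) - N em) - (M x - M em) = 0 := by
        have hq : q em = N em + (M x - M em) := rfl
        rw [hc]
        linarith [hq]
      have T1 : 0 < ∫ z in em..(min x ep), (z - min x ep) * (η z - ρ z) :=
        intervalIntegral.intervalIntegral_pos_of_pos_on
          (((continuous_id.sub continuous_const).mul (hηc.sub hρc)).intervalIntegrable _ _)
          (fun z hz => mul_pos_of_neg_of_neg (by linarith [hz.2])
            (sub_neg.2 (hρη z ⟨hz.1, lt_of_lt_of_le hz.2 hpep⟩))) hemp
      have T2 : 0 ≤ ∫ z in (min x ep)..x, (z - min x ep) * (η z - ρ z) := by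
        rcases le_total x ep with hcase | hcase
        · rw [min_eq_left hcase, intervalIntegral.integral_same]
        · rw [min_eq_right hcase]
          refine intervalIntegral.integral_nonneg hcase fun z hz => mul_nonneg
            (by linarith [hz.1]) (sub_nonneg.2 (hρη' z fun h' => ?_))
          exact absurd h'.2 (not_lt.2 hz.1)
      have T3 : 0 ≤ ∫ z in x..(g em), (z - min x ep) * η z :=
        intervalIntegral.integral_nonneg hxg1.le
          (fun z hz => mul_nonneg (by linarith [hz.1]) (hη0 z))
      have hadj : (∫ z in em..(min x ep), (z - min x ep) * (η z - ρ z))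
          + (∫ z in (min x ep)..x, (z - min x ep) * (η z - ρ z))
          = ∫ z in em..x, (z - min x ep) * (η z - ρ z) :=
        intervalIntegral.integral_add_adjacent_intervals
          (((continuous_id.sub continuous_const).mul (hηc.sub hρc)).intervalIntegrable _ _)
          (((continuous_id.sub continuous_const).mul (hηc.sub hρc)).intervalIntegrable _ _)
      have key : (Nz (g em) - Nz em) - (Mz x - Mz em)
          = (∫ z in em..x, (z - min x ep) * (η z - ρ z))
            + (∫ z in x..(g em), (z - min x ep) * η z)
            + (min x ep) * ((N (g em) - N em) - (M x - M em)) := by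
        rw [disp_comb hηc hρc (min x ep) em x, disp_expand' hηc (min x ep) x (g em),
          hNzd em x, hMzd em x, hNd em x, hMd em x, hNzd x (g em), hNd x (g em)]
        ring
      rw [hmass, mul_zero, add_zero] at key
      have hrfl : Ψ em = (Nz (g em) - Nz em) - (Mz x - Mz em) := rfl
      linarith
    · -- right endpoint where g = rν
      have hκmem : κ ∈ Set.Icc (φ lν) (φ em) := ⟨hφlνκ.le, hB.le⟩
      obtain ⟨r, hrmem, hφr⟩ := intermediate_value_Icc hlνem.le hφc.continuousOn hκmem
      have hrem : r < em := lt_of_le_of_ne hrmem.2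
        (fun h => by rw [h] at hφr; exact absurd hφr (ne_of_gt hB))
      have hlr : l ≤ r := by
        by_contra hh
        push_neg at hh
        have := hφmono r l hh.le hlem.le
        rw [hφr] at this
        linarith
      refine ⟨r, hlr, hrem.le, le_of_eq hφr, ?_⟩
      obtain ⟨ha, hb, hc, hd⟩ := hgprop r (by rw [hφr]; exact hκpos.le) (le_of_eq hφr)
      have hgr : g r = rν := by
        refine le_antisymm hb ?_
        by_contra hh
        push_neg at hh
        have hst := hNstrict (g r) rν ha hh (le_refl _)
        rw [hc, hqφ, hφr, hN1] at hst
        simp only [hκdef] at hst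
        linarith
      have hmass : N r - M r = 1 - M x := by
        have h' : N (g r) = q r := hc
        rw [hgr, hN1] at h'
        have hq : q r = N r + (M x - M r) := rfl
        linarith [h']
      have B1 : x * (1 - M x) < Mz rν - Mz x := by
        have ha1 : 0 < ∫ z in x..rμ, (z - x) * ρ z :=
          intervalIntegral.intervalIntegral_pos_of_pos_on
            (((continuous_id.sub continuous_const).mul hρc).intervalIntegrable _ _)
            (fun z hz => mul_pos (by linarith [hz.1])
              (hρpos z ⟨by linarith [hz.1], hz.2⟩)) hxrμ
        have ha2 : 0 ≤ ∫ z in rμ..rν, (z - x) * ρ z :=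
          intervalIntegral.integral_nonneg h5.le
            (fun z hz => mul_nonneg (by linarith [hz.1]) (hρ0 z))
        have hadj : (∫ z in x..rμ, (z - x) * ρ z) + (∫ z in rμ..rν, (z - x) * ρ z)
            = ∫ z in x..rν, (z - x) * ρ z :=
          intervalIntegral.integral_add_adjacent_intervals
            (((continuous_id.sub continuous_const).mul hρc).intervalIntegrable _ _)
            (((continuous_id.sub continuous_const).mul hρc).intervalIntegrable _ _)
        have he := disp_expand' hρc x x rν
        rw [hMzd x rν, hMd x rν, hM1] at he
        linarith
      have B2 : Nz r - Mz r ≤ r * (N r - M r) := by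
        have hnn : 0 ≤ ∫ z in lν..r, (r - z) * (η z - ρ z) :=
          intervalIntegral.integral_nonneg hrmem.1
            (fun z hz => mul_nonneg (by linarith [hz.2]) (sub_nonneg.2
              (hρη' z fun h' => absurd h'.1 (not_lt.2 (by linarith [hz.2])))))
        have flip : (∫ z in lν..r, (r - z) * (η z - ρ z))
            = -∫ z in lν..r, (z - r) * (η z - ρ z) := by
          rw [← intervalIntegral.integral_neg]
          exact intervalIntegral.integral_congr fun z _ => by ring
        have c := disp_comb hηc hρc r lν r
        rw [hNzd lν r, hMzd lν r, hNd lν r, hMd lν r, hNz0, hMz0, hN0, hM0] at c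
        linarith [hnn, flip, c]
      have hrfl : Ψ r = (Nz (g r) - Nz r) - (Mz x - Mz r) := rfl
      rw [hgr] at hrfl
      have hx_r : r < x := lt_trans hrem hemx
      have hprod : 0 < (x - r) * (1 - M x) :=
        mul_pos (by linarith) (by linarith [hMx1])
      have hexp : (x - r) * (1 - M x) = x * (1 - M x) - r * (1 - M x) := by ring
      have hB2' : Nz r - Mz r ≤ r * (1 - M x) := by rw [hmass] at B2; exact B2
      linarith [B1, hB2', hMzNz, hrfl, hprod, hexp]
  -- IVT
  have h0mem : (0:ℝ) ∈ Set.Icc (Ψ l) (Ψ r) := ⟨hΨl, hΨr.le⟩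
  obtain ⟨f, hfmem, hΨf⟩ := intermediate_value_Icc hlr hΨc.continuousOn h0mem
  have hfem : f < em := by
    rcases lt_or_eq_of_le hfmem.2 with h | h
    · exact lt_of_lt_of_le h hrem
    · exfalso; rw [h] at hΨf; rw [hΨf] at hΨr; exact lt_irrefl _ hΨr
  have hφf0 : 0 < φ f := by
    rcases hstrong with h | h
    · exact lt_of_lt_of_le h (hφmono l f hfmem.1 hfem.le)
    · have hlf : l < f := by
        rcases lt_or_eq_of_le hfmem.1 with h' | h'
        · exact h'
        · exfalso; rw [← h'] at hΨf; rw [hΨf] at h; exact lt_irrefl _ h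
      exact lt_of_le_of_lt hφl0 (hφstrict l f hlνl hlf hfem.le)
  have hφfκ : φ f ≤ κ := le_trans (hφmono f r hfmem.2 hrem) hφrκ
  obtain ⟨hga, hgb, hgN, hgd⟩ := hgprop f hφf0.le hφfκ
  have hxgf : x < g f := hgx f hφf0 hφfκ
  refine ⟨f, g f, hfem, hemx, hxgf, ?_, ?_⟩
  · rw [hMd f x, hNd f (g f), hgN, hqφ]
    simp only [hφdef]; ring
  · rw [hMzd f x, hNzd f (g f)]
    simp only [hΨdef] at hΨf
    linarith
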